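/- Let m ≥ 2 and let τ ∈ S_m be cluster-free. For all n ≥ 3, all l with 2 ≤ l ≤ n-1, and all k with 1 ≤ k ≤ n-l+1, one has |A^{(n)}_{l;k} ∩ S_n(τ)| = |S_{n-l+1}(τ)| · |S_l(τ)|; equivalently, under the uniform probability measure P_n^{av(τ)} on S_n(τ), P_n^{av(τ)}(A^{(n)}_{l;k}) = |S_{n-l+1}(τ)|·|S_l(τ)| / |S_n(τ)|. -/
import Mathlib

open Filter

def Contains {n m : ℕ} (σ : Fin n → Fin n) (τ : Fin m → Fin m) : Prop :=
  ∃ f : Fin m → Fin n, StrictMono f ∧ ∀ j k : Fin m, σ (f j) < σ (f k) ↔ τ j < τ k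

def Avoids {n m : ℕ} (σ : Fin n → Fin n) (τ : Fin m → Fin m) : Prop :=
  ¬ Contains σ τ

def AvoidSet (n : ℕ) {m : ℕ} (τ : Equiv.Perm (Fin m)) : Set (Equiv.Perm (Fin n)) :=
  {σ : Equiv.Perm (Fin n) | Avoids ⇑σ ⇑τ}

def ClusterAt {n : ℕ} (l k a : ℕ) (σ : Equiv.Perm (Fin n)) : Prop :=
  (Finset.univ.filter fun i : Fin n => a ≤ (i : ℕ) + 1 ∧ (i : ℕ) + 1 < a + l).image
      (fun i => (σ i : ℕ) + 1) = Finset.Ico k (k + l)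

def ClusterEvent (n l k : ℕ) : Set (Equiv.Perm (Fin n)) :=
  {σ : Equiv.Perm (Fin n) | ∃ a : ℕ, 1 ≤ a ∧ a ≤ n - l + 1 ∧ ClusterAt l k a σ}

def ClusterFree {m : ℕ} (τ : Equiv.Perm (Fin m)) : Prop :=
  ∀ l a k : ℕ, 2 ≤ l → l ≤ m - 1 → 1 ≤ a → a + l ≤ m + 1 → ¬ ClusterAt l k a τ

def ContainsTightly12 {m : ℕ} (τ : Equiv.Perm (Fin m)) : Prop :=
  ∃ i j : Fin m, (j : ℕ) = (i : ℕ) + 1 ∧ (τ j : ℕ) = (τ i : ℕ) + 1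

def ContainsTightly21 {m : ℕ} (τ : Equiv.Perm (Fin m)) : Prop :=
  ∃ i j : Fin m, (j : ℕ) = (i : ℕ) + 1 ∧ (τ i : ℕ) = (τ j : ℕ) + 1

def perm123 : Equiv.Perm (Fin 3) := Equiv.refl (Fin 3)

def perm321 : Equiv.Perm (Fin 3) :=
  ⟨![2, 1, 0], ![2, 1, 0], by intro x; fin_cases x <;> rfl, by intro x; fin_cases x <;> rfl⟩

def p2413 : Equiv.Perm (Fin 4) :=
  ⟨![1, 3, 0, 2], ![2, 0, 3, 1], by intro x; fin_cases x <;> rfl, by intro x; fin_cases x <;> rfl⟩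

def p3142 : Equiv.Perm (Fin 4) :=
  ⟨![2, 0, 3, 1], ![1, 3, 0, 2], by intro x; fin_cases x <;> rfl, by intro x; fin_cases x <;> rfl⟩

def SepSet (n : ℕ) : Set (Equiv.Perm (Fin n)) :=
  {σ : Equiv.Perm (Fin n) | Avoids ⇑σ ⇑p2413 ∧ Avoids ⇑σ ⇑p3142}



set_option linter.unusedVariables false
set_option maxHeartbeats 1000000

namespace CP

variable {n l b c x y : ℕ}

def ctr (b l x : ℕ) : ℕ := if x ≤ b then x else if x < b + l then b else x - (l - 1)
def xpd (b l y : ℕ) : ℕ := if y ≤ b then y else y + (l - 1)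

variable {n l b c x y : ℕ}

lemma ctr_lt (hl : 1 ≤ l) (hbn : b + l ≤ n) (hx : x < n) : ctr b l x < n - l + 1 := by
  unfold ctr; split_ifs <;> omega

lemma xpd_lt (hl : 1 ≤ l) (hbn : b + l ≤ n) (hy : y < n - l + 1) : xpd b l y < n := by
  unfold xpd; split_ifs <;> omega

lemma ctr_xpd (hl : 1 ≤ l) : ctr b l (xpd b l y) = y := by
  unfold ctr xpd; split_ifs <;> omega

lemma xpd_ctr_off (hl : 1 ≤ l) (h : x < b ∨ b + l ≤ x) : xpd b l (ctr b l x) = x := by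
  unfold ctr xpd; split_ifs <;> omega

lemma ctr_eq_b_iff (hl : 1 ≤ l) : ctr b l x = b ↔ (b ≤ x ∧ x < b + l) := by
  unfold ctr; split_ifs <;> omega

lemma ctr_in_block (hl : 1 ≤ l) (h1 : b ≤ x) (h2 : x < b + l) : ctr b l x = b := by
  unfold ctr; split_ifs <;> omega

lemma ctr_mono (h : x ≤ y) : ctr b l x ≤ ctr b l y := by
  unfold ctr; split_ifs <;> omega

lemma ctr_lt_ctr (hl : 1 ≤ l) (h : ¬((b ≤ x ∧ x < b + l) ∧ (b ≤ y ∧ y < b + l))) :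
    ctr b l x < ctr b l y ↔ x < y := by
  unfold ctr; split_ifs <;> omega

lemma xpd_strictMono (h : x < y) : xpd b l x < xpd b l y := by
  unfold xpd; split_ifs <;> omega

lemma xpd_in_block_iff (hl : 1 ≤ l) : (b ≤ xpd b l y ∧ xpd b l y < b + l) ↔ y = b := by
  unfold xpd; split_ifs <;> omega

lemma xpd_inj (h : xpd b l x = xpd b l y) : x = y := by
  unfold xpd at h; split_ifs at h <;> omega

lemma xpd_le (h : y ≤ b) : xpd b l y = y := by unfold xpd; split_ifs <;> omega

/-- the positions finset -/
def posF (n b l : ℕ) : Finset (Fin n) :=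
  Finset.univ.filter fun i : Fin n => b ≤ (i : ℕ) ∧ (i : ℕ) < b + l

lemma mem_posF {i : Fin n} : i ∈ posF n b l ↔ b ≤ (i : ℕ) ∧ (i : ℕ) < b + l := by
  simp [posF]

lemma card_posF (hbn : b + l ≤ n) : (posF n b l).card = l := by
  have h : (posF n b l).image (fun i : Fin n => (i : ℕ)) = Finset.Ico b (b + l) := by
    ext z
    simp only [Finset.mem_image, mem_posF, Finset.mem_Ico]
    constructor
    · rintro ⟨i, hi, rfl⟩; exact hi
    · rintro ⟨h1, h2⟩; exact ⟨⟨z, by omega⟩, ⟨h1, h2⟩, rfl⟩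
  have := Finset.card_image_of_injective (posF n b l) (Fin.val_injective)
  rw [h] at this
  simp [← this]

/-- upgrade one-directional block property to iff -/
lemma block_iff (hl : 1 ≤ l) (hbn : b + l ≤ n) (hcn : c + l ≤ n)
    (σ : Equiv.Perm (Fin n))
    (H1 : ∀ i : Fin n, b ≤ (i : ℕ) → (i : ℕ) < b + l → c ≤ (σ i : ℕ) ∧ (σ i : ℕ) < c + l) :
    ∀ i : Fin n, ((b ≤ (i : ℕ) ∧ (i : ℕ) < b + l) ↔ (c ≤ (σ i : ℕ) ∧ (σ i : ℕ) < c + l)) := by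
  -- P ⊆ Q, card Q = card P, so P = Q
  set P := posF n b l with hP
  set Q := Finset.univ.filter (fun i : Fin n => c ≤ (σ i : ℕ) ∧ (σ i : ℕ) < c + l) with hQ
  have hPQ : P ⊆ Q := by
    intro i hi
    rw [hP, mem_posF] at hi
    simp only [hQ, Finset.mem_filter, Finset.mem_univ, true_and]
    exact H1 i hi.1 hi.2
  have hcardQ : Q.card = l := by
    have h : Q.image (fun i => ((σ i : Fin n) : ℕ)) = Finset.Ico c (c + l) := by
      ext v
      simp only [Finset.mem_image, hQ, Finset.mem_filter, Finset.mem_univ, true_and,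
        Finset.mem_Ico]
      constructor
      · rintro ⟨i, hi, rfl⟩; exact hi
      · rintro ⟨h1, h2⟩
        refine ⟨σ.symm ⟨v, by omega⟩, ?_, ?_⟩ <;> simp [h1, h2]
    have hinj : Set.InjOn (fun i => ((σ i : Fin n) : ℕ)) Q := by
      intro i _ j _ hij
      exact σ.injective (Fin.val_injective hij)
    have := Finset.card_image_of_injOn hinj
    rw [h] at this
    simp [← this]
  have hPQeq : P = Q := Finset.eq_of_subset_of_card_le hPQ (by rw [hcardQ, card_posF hbn])
  intro i
  constructor
  · intro h; exact H1 i h.1 h.2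
  · intro h
    have : i ∈ Q := by simp [hQ, h.1, h.2]
    rw [← hPQeq, hP, mem_posF] at this
    exact this

lemma block_unique (hl : 1 ≤ l) (hbn : b + l ≤ n) {b' : ℕ} (hbn' : b' + l ≤ n)
    (σ : Equiv.Perm (Fin n))
    (H : ∀ i : Fin n, ((b ≤ (i : ℕ) ∧ (i : ℕ) < b + l) ↔ (c ≤ (σ i : ℕ) ∧ (σ i : ℕ) < c + l)))
    (H' : ∀ i : Fin n, ((b' ≤ (i : ℕ) ∧ (i : ℕ) < b' + l) ↔ (c ≤ (σ i : ℕ) ∧ (σ i : ℕ) < c + l))) :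
    b = b' := by
  have h1 : b' ≤ b := by
    have := ((H' ⟨b, by omega⟩).mpr ((H ⟨b, by omega⟩).mp (by simp; omega))).1
    simpa using this
  have h2 : b ≤ b' := by
    have := ((H ⟨b', by omega⟩).mpr ((H' ⟨b', by omega⟩).mp (by simp; omega))).1
    simpa using this
  omega

/-- block iff gives ClusterAt at a = b+1 with k = c+1 -/
lemma clusterAt_of_block (hl : 1 ≤ l) (hbn : b + l ≤ n) (hcn : c + l ≤ n)
    (σ : Equiv.Perm (Fin n))
    (H : ∀ i : Fin n, ((b ≤ (i : ℕ) ∧ (i : ℕ) < b + l) ↔ (c ≤ (σ i : ℕ) ∧ (σ i : ℕ) < c + l))) :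
    ClusterAt l (c + 1) (b + 1) σ := by
  unfold ClusterAt
  have hfil : (Finset.univ.filter fun i : Fin n => b + 1 ≤ (i : ℕ) + 1 ∧ (i : ℕ) + 1 < b + 1 + l)
      = posF n b l := by
    ext i; rw [mem_posF]; simp; omega
  rw [hfil]
  apply Finset.eq_of_subset_of_card_le
  · intro v hv
    simp only [Finset.mem_image] at hv
    obtain ⟨i, hi, rfl⟩ := hv
    rw [mem_posF] at hi
    have := (H i).mp hi
    simp only [Finset.mem_Ico]; omega
  · rw [Nat.card_Ico]
    have hinj : Set.InjOn (fun i : Fin n => (σ i : ℕ) + 1) (posF n b l) := by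
      intro i _ j _ hij
      simp only at hij
      exact σ.injective (Fin.val_injective (by omega))
    rw [Finset.card_image_of_injOn hinj, card_posF hbn]
    omega

/-- ClusterAt gives block iff -/
lemma block_of_clusterAt {k a : ℕ} (hl : 1 ≤ l) (hk : 1 ≤ k) (ha : 1 ≤ a)
    (hbn : (a - 1) + l ≤ n) (hcn : (k - 1) + l ≤ n)
    (σ : Equiv.Perm (Fin n)) (hC : ClusterAt l k a σ) :
    ∀ i : Fin n, (((a-1) ≤ (i : ℕ) ∧ (i : ℕ) < (a-1) + l) ↔
      ((k-1) ≤ (σ i : ℕ) ∧ (σ i : ℕ) < (k-1) + l)) := by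
  apply block_iff hl hbn hcn σ
  intro i h1 h2
  unfold ClusterAt at hC
  have : (σ i : ℕ) + 1 ∈ Finset.Ico k (k + l) := by
    rw [← hC]
    exact Finset.mem_image_of_mem _ (by simp; omega)
  simp only [Finset.mem_Ico] at this
  omega

section easy
variable (σ : Equiv.Perm (Fin n)) {m : ℕ} (τ : Equiv.Perm (Fin m))

lemma contains_of_pi (π : Equiv.Perm (Fin (n - l + 1)))
    (hl : 1 ≤ l) (hbn : b + l ≤ n) (hcn : c + l ≤ n)
    (Hblk : ∀ i : Fin n, (b ≤ (i : ℕ) ∧ (i : ℕ) < b + l) ↔ (c ≤ (σ i : ℕ) ∧ (σ i : ℕ) < c + l))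
    (Hπ : ∀ (i : Fin n) (h : ctr b l (i : ℕ) < n - l + 1),
      ((π ⟨ctr b l (i : ℕ), h⟩ : Fin (n - l + 1)) : ℕ) = ctr c l ((σ i : ℕ)))
    (h : Contains ⇑π ⇑τ) : Contains ⇑σ ⇑τ := by
  obtain ⟨f, hf, hord⟩ := h
  refine ⟨fun j => ⟨xpd b l (f j), xpd_lt hl hbn (f j).isLt⟩, ?_, ?_⟩
  · intro j k hjk
    exact xpd_strictMono (hf hjk)
  · intro j k
    set g : Fin m → Fin n := fun j => ⟨xpd b l (f j), xpd_lt hl hbn (f j).isLt⟩ with hg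
    have key : ∀ j : Fin m, ((π (f j) : Fin (n - l + 1)) : ℕ) = ctr c l ((σ (g j) : ℕ)) := by
      intro j
      have h' : ctr b l ((g j : ℕ)) < n - l + 1 := by
        show ctr b l (xpd b l (f j)) < n - l + 1
        rw [ctr_xpd hl]; exact (f j).isLt
      have := Hπ (g j) h'
      rwa [show (⟨ctr b l ((g j : ℕ)), h'⟩ : Fin (n - l + 1)) = f j from
        Fin.ext (by show ctr b l (xpd b l (f j)) = f j; rw [ctr_xpd hl])] at this
    rcases eq_or_ne j k with rfl | hne
    · simp
    have hposblk : ∀ j : Fin m, (b ≤ ((g j : Fin n) : ℕ) ∧ ((g j : Fin n) : ℕ) < b + l) ↔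
        ((f j : ℕ) = b) := fun j => xpd_in_block_iff hl
    have hnotboth : ¬((c ≤ (σ (g j) : ℕ) ∧ (σ (g j) : ℕ) < c + l) ∧
        (c ≤ (σ (g k) : ℕ) ∧ (σ (g k) : ℕ) < c + l)) := by
      rintro ⟨h1, h2⟩
      have e1 : (f j : ℕ) = b := (hposblk j).mp ((Hblk (g j)).mpr h1)
      have e2 : (f k : ℕ) = b := (hposblk k).mp ((Hblk (g k)).mpr h2)
      exact hne (hf.injective (Fin.ext (e1.trans e2.symm)))
    calc σ (g j) < σ (g k) ↔ (σ (g j) : ℕ) < (σ (g k) : ℕ) := Fin.lt_def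
      _ ↔ ctr c l (σ (g j) : ℕ) < ctr c l (σ (g k) : ℕ) := (ctr_lt_ctr hl hnotboth).symm
      _ ↔ (π (f j) : ℕ) < (π (f k) : ℕ) := by rw [key j, key k]
      _ ↔ π (f j) < π (f k) := Fin.lt_def.symm
      _ ↔ τ j < τ k := hord j k

lemma contains_of_rho (ρ : Equiv.Perm (Fin l))
    (hl : 1 ≤ l) (hbn : b + l ≤ n)
    (Hρ : ∀ (j : Fin l) (h : b + (j : ℕ) < n), ((σ ⟨b + (j : ℕ), h⟩ : Fin n) : ℕ) = c + (ρ j : ℕ))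
    (h : Contains ⇑ρ ⇑τ) : Contains ⇑σ ⇑τ := by
  obtain ⟨f, hf, hord⟩ := h
  refine ⟨fun j => ⟨b + (f j : ℕ), by have := (f j).isLt; omega⟩, ?_, ?_⟩
  · intro j k hjk
    have := hf hjk
    simp only [Fin.lt_def] at this ⊢
    omega
  · intro j k
    have key : ∀ j : Fin m, ((σ ⟨b + (f j : ℕ), by have := (f j).isLt; omega⟩ : Fin n) : ℕ)
        = c + (ρ (f j) : ℕ) := fun j => Hρ (f j) _
    simp only [Fin.lt_def, key j, key k]
    rw [← Fin.lt_def, ← hord j k, Fin.lt_def]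
    omega

end easy
lemma convex_eq_Icc (F : Finset ℕ) (hne : F.Nonempty)
    (hconv : ∀ x ∈ F, ∀ y ∈ F, ∀ z, x ≤ z → z ≤ y → z ∈ F) :
    F = Finset.Icc (F.min' hne) (F.max' hne) := by
  ext z
  constructor
  · intro hz
    exact Finset.mem_Icc.mpr ⟨F.min'_le z hz, F.le_max' z hz⟩
  · intro hz
    rw [Finset.mem_Icc] at hz
    exact hconv _ (F.min'_mem hne) _ (F.max'_mem hne) z hz.1 hz.2

lemma contains_cases {m : ℕ} (τ : Equiv.Perm (Fin m)) (hτ : ClusterFree τ)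
    (σ : Equiv.Perm (Fin n)) (π : Equiv.Perm (Fin (n - l + 1))) (ρ : Equiv.Perm (Fin l))
    (hl : 1 ≤ l) (hbn : b + l ≤ n)
    (Hblk : ∀ i : Fin n, (b ≤ (i : ℕ) ∧ (i : ℕ) < b + l) ↔ (c ≤ (σ i : ℕ) ∧ (σ i : ℕ) < c + l))
    (Hπ : ∀ (i : Fin n) (h : ctr b l (i : ℕ) < n - l + 1),
      ((π ⟨ctr b l (i : ℕ), h⟩ : Fin (n - l + 1)) : ℕ) = ctr c l ((σ i : ℕ)))
    (Hρ : ∀ (j : Fin l) (h : b + (j : ℕ) < n), ((σ ⟨b + (j : ℕ), h⟩ : Fin n) : ℕ) = c + (ρ j : ℕ))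
    (h : Contains ⇑σ ⇑τ) : Contains ⇑π ⇑τ ∨ Contains ⇑ρ ⇑τ := by
  obtain ⟨f, hf, hord⟩ := h
  set S : Finset (Fin m) :=
    Finset.univ.filter (fun j : Fin m => b ≤ (f j : ℕ) ∧ (f j : ℕ) < b + l) with hS
  have hSmem : ∀ j : Fin m, j ∈ S ↔ (b ≤ (f j : ℕ) ∧ (f j : ℕ) < b + l) := by
    intro j; simp [hS]
  have hSval : ∀ j : Fin m, j ∈ S ↔ (c ≤ (σ (f j) : ℕ) ∧ (σ (f j) : ℕ) < c + l) :=
    fun j => (hSmem j).trans (Hblk (f j))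
  by_cases hs1 : S.card ≤ 1
  · -- π contains τ
    left
    have hnb : ∀ j k : Fin m, j ≠ k →
        ¬((b ≤ (f j : ℕ) ∧ (f j : ℕ) < b + l) ∧ (b ≤ (f k : ℕ) ∧ (f k : ℕ) < b + l)) := by
      rintro j k hne ⟨h1, h2⟩
      have : 1 < S.card :=
        Finset.one_lt_card.mpr ⟨j, (hSmem j).mpr h1, k, (hSmem k).mpr h2, hne⟩
      omega
    refine ⟨fun j => ⟨ctr b l (f j : ℕ), ctr_lt hl hbn (f j).isLt⟩, ?_, ?_⟩
    · intro j k hjk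
      rw [Fin.lt_def]
      exact (ctr_lt_ctr hl (hnb j k (ne_of_lt hjk))).mpr (hf hjk)
    · intro j k
      have key : ∀ j : Fin m,
          ((π ⟨ctr b l (f j : ℕ), ctr_lt hl hbn (f j).isLt⟩ : Fin (n - l + 1)) : ℕ)
          = ctr c l ((σ (f j) : ℕ)) := fun j => Hπ (f j) _
      rcases eq_or_ne j k with rfl | hne
      · simp
      have hnbv : ¬((c ≤ (σ (f j) : ℕ) ∧ (σ (f j) : ℕ) < c + l) ∧
          (c ≤ (σ (f k) : ℕ) ∧ (σ (f k) : ℕ) < c + l)) := by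
        rintro ⟨h1, h2⟩
        exact hnb j k hne ⟨(hSmem j).mp ((hSval j).mpr h1), (hSmem k).mp ((hSval k).mpr h2)⟩
      rw [← hord j k]
      simp only [Fin.lt_def, key j, key k]
      exact ctr_lt_ctr hl hnbv
  · by_cases hsm : S.card = m
    · -- ρ contains τ
      right
      have hSuniv : S = Finset.univ := Finset.eq_univ_of_card S (by simpa using hsm)
      have hblk : ∀ j : Fin m, b ≤ (f j : ℕ) ∧ (f j : ℕ) < b + l :=
        fun j => (hSmem j).mp (hSuniv ▸ Finset.mem_univ j)
      refine ⟨fun j => ⟨(f j : ℕ) - b, by have := (hblk j); omega⟩, ?_, ?_⟩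
      · intro j k hjk
        have := hf hjk
        rw [Fin.lt_def] at this
        have h1 := (hblk j).1
        exact Fin.mk_lt_mk.mpr (by omega)
      · intro j k
        have key : ∀ j : Fin m, (σ (f j) : ℕ) =
            c + ((ρ ⟨(f j : ℕ) - b, by have := hblk j; omega⟩ : Fin l) : ℕ) := by
          intro j
          have hb1 := hblk j
          have h' : b + ((f j : ℕ) - b) < n := by omega
          have := Hρ ⟨(f j : ℕ) - b, by omega⟩ h'
          rwa [show (⟨b + ((f j : ℕ) - b), h'⟩ : Fin n) = f j from Fin.ext (by simp; omega)]
            at this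
      -- order
        rw [← hord j k]
        simp only [Fin.lt_def]
        rw [key j, key k]
        omega
    · -- contradiction with cluster-freeness
      exfalso
      have hs2 : 2 ≤ S.card := by omega
      have hsle : S.card ≤ m := le_trans (Finset.card_le_univ S) (by simp)
      have hne : S.Nonempty := Finset.card_pos.mp (by omega)
      set Fpos : Finset ℕ := S.image (fun j : Fin m => (j : ℕ)) with hFpos
      set Fval : Finset ℕ := S.image (fun j : Fin m => ((τ j : Fin m) : ℕ)) with hFval
      have hnep : Fpos.Nonempty := hne.image _
      have hnev : Fval.Nonempty := hne.image _
      have hcardp : Fpos.card = S.card := Finset.card_image_of_injective S Fin.val_injective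
      have hcardv : Fval.card = S.card :=
        Finset.card_image_of_injective S (Fin.val_injective.comp τ.injective)
      have hconvp : ∀ x ∈ Fpos, ∀ y ∈ Fpos, ∀ z, x ≤ z → z ≤ y → z ∈ Fpos := by
        intro x hx y hy z hzx hzy
        obtain ⟨j1, hj1, rfl⟩ := Finset.mem_image.mp hx
        obtain ⟨j2, hj2, rfl⟩ := Finset.mem_image.mp hy
        have hz : z < m := lt_of_le_of_lt hzy j2.isLt
        refine Finset.mem_image.mpr ⟨⟨z, hz⟩, ?_, rfl⟩
        rw [hSmem]
        have h1 := (hSmem j1).mp hj1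
        have h2 := (hSmem j2).mp hj2
        have m1 : f j1 ≤ f ⟨z, hz⟩ := hf.monotone (by rw [Fin.le_def]; exact hzx)
        have m2 : f ⟨z, hz⟩ ≤ f j2 := hf.monotone (by rw [Fin.le_def]; exact hzy)
        rw [Fin.le_def] at m1 m2
        omega
      have hconvv : ∀ x ∈ Fval, ∀ y ∈ Fval, ∀ z, x ≤ z → z ≤ y → z ∈ Fval := by
        intro x hx y hy z hzx hzy
        obtain ⟨j1, hj1, rfl⟩ := Finset.mem_image.mp hx
        obtain ⟨j2, hj2, rfl⟩ := Finset.mem_image.mp hy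
        have hz : z < m := lt_of_le_of_lt hzy (τ j2).isLt
        set jz := τ.symm ⟨z, hz⟩ with hjz
        have hτjz : (τ jz : ℕ) = z := by simp [hjz]
        refine Finset.mem_image.mpr ⟨jz, ?_, hτjz⟩
        rcases eq_or_lt_of_le hzx with heq | hlt1
        · have : jz = j1 := τ.injective (Fin.val_injective (by rw [hτjz, ← heq]))
          rwa [this]
        rcases eq_or_lt_of_le hzy with heq | hlt2
        · have : jz = j2 := τ.injective (Fin.val_injective (by rw [hτjz, heq]))
          rwa [this]
        have s1 : σ (f j1) < σ (f jz) :=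
          (hord j1 jz).mpr (Fin.lt_def.mpr (by rw [hτjz]; exact hlt1))
        have s2 : σ (f jz) < σ (f j2) :=
          (hord jz j2).mpr (Fin.lt_def.mpr (by rw [hτjz]; exact hlt2))
        rw [hSval]
        have v1 := (hSval j1).mp hj1
        have v2 := (hSval j2).mp hj2
        rw [Fin.lt_def] at s1 s2
        omega
      set p := Fpos.min' hnep with hp
      set q := Fval.min' hnev with hq
      have hIpos : Fpos = Finset.Icc p (p + S.card - 1) := by
        have h0 := convex_eq_Icc Fpos hnep hconvp
        have hm' : p ≤ Fpos.max' hnep := Fpos.min'_le _ (Fpos.max'_mem hnep)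
        have hc0 : Fpos.card = Fpos.max' hnep + 1 - p := by
          have := congrArg Finset.card h0
          rwa [Nat.card_Icc] at this
        rw [h0]
        congr 1
        omega
      have hIval : Fval = Finset.Icc q (q + S.card - 1) := by
        have h0 := convex_eq_Icc Fval hnev hconvv
        have hm' : q ≤ Fval.max' hnev := Fval.min'_le _ (Fval.max'_mem hnev)
        have hc0 : Fval.card = Fval.max' hnev + 1 - q := by
          have := congrArg Finset.card h0
          rwa [Nat.card_Icc] at this
        rw [h0]
        congr 1
        omega
      have hpm : p + S.card - 1 < m := by
        have : p + S.card - 1 ∈ Fpos := by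
          rw [hIpos]; rw [Finset.mem_Icc]; omega
        obtain ⟨j, _, hj⟩ := Finset.mem_image.mp this
        rw [← hj]; exact j.isLt
      apply hτ S.card (p + 1) (q + 1) hs2 (by omega) (by omega) (by omega)
      unfold ClusterAt
      have hfil : (Finset.univ.filter fun i : Fin m =>
          p + 1 ≤ (i : ℕ) + 1 ∧ (i : ℕ) + 1 < p + 1 + S.card) = S := by
        ext i
        simp only [Finset.mem_filter, Finset.mem_univ, true_and]
        constructor
        · rintro ⟨h1, h2⟩
          have : (i : ℕ) ∈ Fpos := by rw [hIpos, Finset.mem_Icc]; omega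
          obtain ⟨j, hj, hji⟩ := Finset.mem_image.mp this
          rwa [show j = i from Fin.val_injective hji] at hj
        · intro hi
          have : (i : ℕ) ∈ Fpos := Finset.mem_image_of_mem _ hi
          rw [hIpos, Finset.mem_Icc] at this
          omega
      rw [hfil]
      ext v
      simp only [Finset.mem_image, Finset.mem_Ico]
      constructor
      · rintro ⟨i, hi, rfl⟩
        have : ((τ i : Fin m) : ℕ) ∈ Fval := Finset.mem_image_of_mem _ hi
        rw [hIval, Finset.mem_Icc] at this
        omega
      · rintro ⟨h1, h2⟩
        have : v - 1 ∈ Fval := by rw [hIval, Finset.mem_Icc]; omega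
        obtain ⟨i, hi, hji⟩ := Finset.mem_image.mp this
        exact ⟨i, hi, by omega⟩
/-- totalized application of a permutation of `Fin N` to a natural number -/
def pval {N : ℕ} (π : Equiv.Perm (Fin N)) (hN : 0 < N) (x : ℕ) : ℕ :=
  ((π ⟨x % N, Nat.mod_lt _ hN⟩ : Fin N) : ℕ)

lemma pval_lt {N : ℕ} (π : Equiv.Perm (Fin N)) (hN : 0 < N) (x : ℕ) : pval π hN x < N :=
  (π _).isLt

lemma pval_eq {N : ℕ} (π : Equiv.Perm (Fin N)) (hN : 0 < N) {x : ℕ} (hx : x < N) :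
    pval π hN x = ((π ⟨x, hx⟩ : Fin N) : ℕ) := by
  unfold pval
  congr 2
  exact Fin.ext (Nat.mod_eq_of_lt hx)

lemma pval_symm {N : ℕ} (π : Equiv.Perm (Fin N)) (hN : 0 < N) {x : ℕ} (hx : x < N) :
    pval π.symm hN (pval π hN x) = x := by
  rw [pval_eq π.symm hN (pval_lt π hN x)]
  have h1 : (⟨pval π hN x, pval_lt π hN x⟩ : Fin N) = π ⟨x % N, Nat.mod_lt _ hN⟩ :=
    Fin.ext rfl
  rw [h1, Equiv.symm_apply_apply]
  exact Nat.mod_eq_of_lt hx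

lemma pval_inj {N : ℕ} (π : Equiv.Perm (Fin N)) (hN : 0 < N) {x y : ℕ} (hx : x < N)
    (hy : y < N) (h : pval π hN x = pval π hN y) : x = y := by
  have := congrArg (pval π.symm hN) h
  rwa [pval_symm π hN hx, pval_symm π hN hy] at this

/-- inflation at the ℕ level -/
def inflN (n l b c : ℕ) (π : Equiv.Perm (Fin (n - l + 1))) (ρ : Equiv.Perm (Fin l))
    (hl : 0 < l) (x : ℕ) : ℕ :=
  if b ≤ x ∧ x < b + l then c + pval ρ hl (x - b)
  else xpd c l (pval π (Nat.succ_pos _) (ctr b l x))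

lemma inflN_lt (π : Equiv.Perm (Fin (n - l + 1))) (ρ : Equiv.Perm (Fin l))
    (hl : 0 < l) (hcn : c + l ≤ n) (hx : x < n) : inflN n l b c π ρ hl x < n := by
  unfold inflN
  split_ifs with h
  · have := pval_lt ρ hl (x - b); omega
  · exact xpd_lt hl hcn (pval_lt _ _ _)

lemma inflN_pos (π : Equiv.Perm (Fin (n - l + 1))) (ρ : Equiv.Perm (Fin l))
    (hl : 0 < l) (hib : b ≤ x ∧ x < b + l) :
    inflN n l b c π ρ hl x = c + pval ρ hl (x - b) := by
  rw [inflN]; exact if_pos hib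

lemma inflN_neg (π : Equiv.Perm (Fin (n - l + 1))) (ρ : Equiv.Perm (Fin l))
    (hl : 0 < l) (hib : ¬(b ≤ x ∧ x < b + l)) :
    inflN n l b c π ρ hl x = xpd c l (pval π (Nat.succ_pos _) (ctr b l x)) := by
  rw [inflN]; exact if_neg hib

lemma inflN_inv (π : Equiv.Perm (Fin (n - l + 1))) (ρ : Equiv.Perm (Fin l))
    (hl : 0 < l) (hbn : b + l ≤ n) (hb' : b < n - l + 1)
    (hbc : pval π (Nat.succ_pos _) b = c) (hx : x < n) :
    inflN n l c b π.symm ρ.symm hl (inflN n l b c π ρ hl x) = x := by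
  by_cases hib : b ≤ x ∧ x < b + l
  · rw [inflN_pos π ρ hl hib]
    have hρlt := pval_lt ρ hl (x - b)
    rw [inflN_pos π.symm ρ.symm hl (by omega)]
    have h2 : c + pval ρ hl (x - b) - c = pval ρ hl (x - b) := by omega
    rw [h2, pval_symm ρ hl (by omega)]
    omega
  · rw [inflN_neg π ρ hl hib]
    set u := pval π (Nat.succ_pos _) (ctr b l x) with hu
    have hult : u < n - l + 1 := pval_lt _ _ _
    have hune : u ≠ c := by
      intro hueq
      have : ctr b l x = b :=
        pval_inj π (Nat.succ_pos _) (ctr_lt hl hbn hx) hb' (by rw [← hu, hueq, hbc])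
      exact hib ((ctr_eq_b_iff hl).mp this)
    have hvnot : ¬(c ≤ xpd c l u ∧ xpd c l u < c + l) := by
      intro hcon
      exact hune ((xpd_in_block_iff hl).mp hcon)
    rw [inflN_neg π.symm ρ.symm hl hvnot, ctr_xpd hl, hu,
      pval_symm π (Nat.succ_pos _) (ctr_lt hl hbn hx)]
    exact xpd_ctr_off hl (by omega)

lemma inflN_blk (π : Equiv.Perm (Fin (n - l + 1))) (ρ : Equiv.Perm (Fin l))
    (hl : 0 < l) (hbn : b + l ≤ n) (hb' : b < n - l + 1)
    (hbc : pval π (Nat.succ_pos _) b = c) (hx : x < n) :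
    (b ≤ x ∧ x < b + l) ↔
      (c ≤ inflN n l b c π ρ hl x ∧ inflN n l b c π ρ hl x < c + l) := by
  by_cases hib : b ≤ x ∧ x < b + l
  · rw [inflN_pos π ρ hl hib]
    have hρlt := pval_lt ρ hl (x - b)
    constructor
    · intro _; omega
    · intro _; exact hib
  · rw [inflN_neg π ρ hl hib]
    set u := pval π (Nat.succ_pos _) (ctr b l x) with hu
    have hune : u ≠ c := by
      intro hueq
      have : ctr b l x = b :=
        pval_inj π (Nat.succ_pos _) (ctr_lt hl hbn hx) hb' (by rw [← hu, hueq, hbc])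
      exact hib ((ctr_eq_b_iff hl).mp this)
    constructor
    · intro h; exact absurd h hib
    · intro hcon
      exact absurd ((xpd_in_block_iff hl).mp hcon) hune

lemma inflN_pi (π : Equiv.Perm (Fin (n - l + 1))) (ρ : Equiv.Perm (Fin l))
    (hl : 0 < l) (hbc : pval π (Nat.succ_pos _) b = c) :
    pval π (Nat.succ_pos _) (ctr b l x) = ctr c l (inflN n l b c π ρ hl x) := by
  by_cases hib : b ≤ x ∧ x < b + l
  · rw [inflN_pos π ρ hl hib]
    have hρlt := pval_lt ρ hl (x - b)
    rw [ctr_in_block hl (Nat.le_add_right _ _) (by omega),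
      ctr_in_block hl hib.1 hib.2, hbc]
  · rw [inflN_neg π ρ hl hib, ctr_xpd hl]

lemma inflN_rho (π : Equiv.Perm (Fin (n - l + 1))) (ρ : Equiv.Perm (Fin l))
    (hl : 0 < l) {j : ℕ} (hj : j < l) :
    inflN n l b c π ρ hl (b + j) = c + pval ρ hl j := by
  rw [inflN_pos π ρ hl (by omega)]
  congr 2
  omega

/-- contraction at the ℕ level -/
def ctrN (n l b c : ℕ) (σ : Equiv.Perm (Fin n)) (hn : 0 < n) (x : ℕ) : ℕ :=
  ctr c l (pval σ hn (xpd b l x))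

lemma ctrN_lt (σ : Equiv.Perm (Fin n)) (hn : 0 < n) (hl : 0 < l) (hcn : c + l ≤ n) :
    ctrN n l b c σ hn x < n - l + 1 :=
  ctr_lt hl hcn (pval_lt _ _ _)

/-- symmetric version of the block hypothesis -/
lemma Hblk_symm (σ : Equiv.Perm (Fin n)) (hn : 0 < n)
    (Hblk : ∀ x : ℕ, x < n →
      ((b ≤ x ∧ x < b + l) ↔ (c ≤ pval σ hn x ∧ pval σ hn x < c + l))) :
    ∀ x : ℕ, x < n →
    ((c ≤ x ∧ x < c + l) ↔ (b ≤ pval σ.symm hn x ∧ pval σ.symm hn x < b + l)) := by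
  intro x hx
  have h1 := Hblk (pval σ.symm hn x) (pval_lt _ _ _)
  have h2 : pval σ hn (pval σ.symm hn x) = x := by
    have := pval_symm σ.symm hn hx
    rwa [Equiv.symm_symm] at this
  rw [h2] at h1
  exact h1.symm

lemma ctrN_inv (σ : Equiv.Perm (Fin n)) (hn : 0 < n) (hl : 0 < l)
    (hbn : b + l ≤ n) (hcn : c + l ≤ n)
    (Hblk : ∀ x : ℕ, x < n →
      ((b ≤ x ∧ x < b + l) ↔ (c ≤ pval σ hn x ∧ pval σ hn x < c + l)))
    (hx : x < n - l + 1) :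
    ctrN n l c b σ.symm hn (ctrN n l b c σ hn x) = x := by
  by_cases hxb : x = b
  · subst hxb
    rw [ctrN, ctrN, xpd_le (le_refl x)]
    have hvb : c ≤ pval σ hn x ∧ pval σ hn x < c + l := (Hblk x (by omega)).mp (by omega)
    rw [ctr_in_block hl hvb.1 hvb.2, xpd_le (le_refl c)]
    have hw := (Hblk_symm σ hn Hblk c (by omega)).mp (by omega)
    exact ctr_in_block hl hw.1 hw.2
  · have hoff : ¬(b ≤ xpd b l x ∧ xpd b l x < b + l) := by
      intro hcon; exact hxb ((xpd_in_block_iff hl).mp hcon)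
    rw [ctrN, ctrN]
    have hpos : xpd b l x < n := xpd_lt hl hbn hx
    have hvoff : ¬(c ≤ pval σ hn (xpd b l x) ∧ pval σ hn (xpd b l x) < c + l) := by
      intro hcon; exact hoff ((Hblk _ hpos).mpr hcon)
    rw [xpd_ctr_off hl (by omega), pval_symm σ hn hpos, ctr_xpd hl]

-- ==== new material ====

/-- bridge : Fin-level block property to ℕ-level -/
lemma HblkN_of_Fin (σ : Equiv.Perm (Fin n)) (hn : 0 < n)
    (H : ∀ i : Fin n, (b ≤ (i : ℕ) ∧ (i : ℕ) < b + l) ↔ (c ≤ (σ i : ℕ) ∧ (σ i : ℕ) < c + l)) :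
    ∀ x : ℕ, x < n → ((b ≤ x ∧ x < b + l) ↔ (c ≤ pval σ hn x ∧ pval σ hn x < c + l)) := by
  intro x hx
  rw [pval_eq σ hn hx]
  exact H ⟨x, hx⟩

lemma HblkFin_of_N (σ : Equiv.Perm (Fin n)) (hn : 0 < n)
    (H : ∀ x : ℕ, x < n → ((b ≤ x ∧ x < b + l) ↔ (c ≤ pval σ hn x ∧ pval σ hn x < c + l))) :
    ∀ i : Fin n, (b ≤ (i : ℕ) ∧ (i : ℕ) < b + l) ↔ (c ≤ (σ i : ℕ) ∧ (σ i : ℕ) < c + l) := by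
  intro i
  have := H i i.isLt
  rwa [pval_eq σ hn i.isLt, Fin.eta] at this

/-- the inflation permutation -/
def phiPerm (n l b c : ℕ) (hl : 0 < l) (hbn : b + l ≤ n) (hcn : c + l ≤ n)
    (π : Equiv.Perm (Fin (n - l + 1))) (ρ : Equiv.Perm (Fin l))
    (hbc : pval π (Nat.succ_pos _) b = c) : Equiv.Perm (Fin n) where
  toFun i := ⟨inflN n l b c π ρ hl i, inflN_lt π ρ hl hcn i.isLt⟩
  invFun i := ⟨inflN n l c b π.symm ρ.symm hl i, inflN_lt π.symm ρ.symm hl hbn i.isLt⟩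
  left_inv i := Fin.ext (inflN_inv π ρ hl hbn (by omega) hbc i.isLt)
  right_inv i := by
    apply Fin.ext
    have hcb : pval π.symm (Nat.succ_pos _) c = b := by
      rw [← hbc, pval_symm π (Nat.succ_pos _) (by omega)]
    have := inflN_inv π.symm ρ.symm hl hcn (by omega) hcb i.isLt
    rwa [Equiv.symm_symm, Equiv.symm_symm] at this

lemma phiPerm_val (hl : 0 < l) (hbn : b + l ≤ n) (hcn : c + l ≤ n)
    (π : Equiv.Perm (Fin (n - l + 1))) (ρ : Equiv.Perm (Fin l))
    (hbc : pval π (Nat.succ_pos _) b = c) (i : Fin n) :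
    ((phiPerm n l b c hl hbn hcn π ρ hbc i : Fin n) : ℕ) = inflN n l b c π ρ hl i := rfl

lemma phiPerm_blk (hl : 0 < l) (hbn : b + l ≤ n) (hcn : c + l ≤ n)
    (π : Equiv.Perm (Fin (n - l + 1))) (ρ : Equiv.Perm (Fin l))
    (hbc : pval π (Nat.succ_pos _) b = c) (i : Fin n) :
    (b ≤ (i : ℕ) ∧ (i : ℕ) < b + l) ↔
      (c ≤ ((phiPerm n l b c hl hbn hcn π ρ hbc i : Fin n) : ℕ) ∧
        ((phiPerm n l b c hl hbn hcn π ρ hbc i : Fin n) : ℕ) < c + l) := by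
  rw [phiPerm_val]
  exact inflN_blk π ρ hl hbn (by omega) hbc i.isLt

lemma phiPerm_pi (hl : 0 < l) (hbn : b + l ≤ n) (hcn : c + l ≤ n)
    (π : Equiv.Perm (Fin (n - l + 1))) (ρ : Equiv.Perm (Fin l))
    (hbc : pval π (Nat.succ_pos _) b = c) (i : Fin n) (h : ctr b l (i : ℕ) < n - l + 1) :
    ((π ⟨ctr b l (i : ℕ), h⟩ : Fin (n - l + 1)) : ℕ) =
      ctr c l ((phiPerm n l b c hl hbn hcn π ρ hbc i : Fin n) : ℕ) := by
  rw [phiPerm_val, ← inflN_pi π ρ hl hbc, pval_eq π (Nat.succ_pos _) h]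

lemma phiPerm_rho (hl : 0 < l) (hbn : b + l ≤ n) (hcn : c + l ≤ n)
    (π : Equiv.Perm (Fin (n - l + 1))) (ρ : Equiv.Perm (Fin l))
    (hbc : pval π (Nat.succ_pos _) b = c) (j : Fin l) (h : b + (j : ℕ) < n) :
    ((phiPerm n l b c hl hbn hcn π ρ hbc ⟨b + (j : ℕ), h⟩ : Fin n) : ℕ) = c + ((ρ j : Fin l) : ℕ) := by
  rw [phiPerm_val, inflN_rho π ρ hl j.isLt, pval_eq ρ hl j.isLt, Fin.eta]

/-- the contraction permutation -/
def ctrPerm (n l b c : ℕ) (σ : Equiv.Perm (Fin n)) (hn : 0 < n) (hl : 0 < l)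
    (hbn : b + l ≤ n) (hcn : c + l ≤ n)
    (Hblk : ∀ x : ℕ, x < n →
      ((b ≤ x ∧ x < b + l) ↔ (c ≤ pval σ hn x ∧ pval σ hn x < c + l))) :
    Equiv.Perm (Fin (n - l + 1)) where
  toFun j := ⟨ctrN n l b c σ hn j, ctrN_lt σ hn hl hcn⟩
  invFun j := ⟨ctrN n l c b σ.symm hn j, ctrN_lt σ.symm hn hl hbn⟩
  left_inv j := Fin.ext (ctrN_inv σ hn hl hbn hcn Hblk j.isLt)
  right_inv j := by
    apply Fin.ext
    have := ctrN_inv σ.symm hn hl hcn hbn (Hblk_symm σ hn Hblk) j.isLt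
    rwa [Equiv.symm_symm] at this

lemma ctrPerm_val (σ : Equiv.Perm (Fin n)) (hn : 0 < n) (hl : 0 < l)
    (hbn : b + l ≤ n) (hcn : c + l ≤ n)
    (Hblk : ∀ x : ℕ, x < n →
      ((b ≤ x ∧ x < b + l) ↔ (c ≤ pval σ hn x ∧ pval σ hn x < c + l)))
    (j : Fin (n - l + 1)) :
    ((ctrPerm n l b c σ hn hl hbn hcn Hblk j : Fin (n - l + 1)) : ℕ) = ctrN n l b c σ hn j := rfl

lemma ctrPerm_pi (σ : Equiv.Perm (Fin n)) (hn : 0 < n) (hl : 0 < l)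
    (hbn : b + l ≤ n) (hcn : c + l ≤ n)
    (Hblk : ∀ x : ℕ, x < n →
      ((b ≤ x ∧ x < b + l) ↔ (c ≤ pval σ hn x ∧ pval σ hn x < c + l)))
    (i : Fin n) (h : ctr b l (i : ℕ) < n - l + 1) :
    ((ctrPerm n l b c σ hn hl hbn hcn Hblk ⟨ctr b l (i : ℕ), h⟩ : Fin (n - l + 1)) : ℕ) =
      ctr c l ((σ i : Fin n) : ℕ) := by
  rw [ctrPerm_val, ctrN]
  show ctr c l (pval σ hn (xpd b l (ctr b l (i : ℕ)))) = ctr c l ((σ i : Fin n) : ℕ)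
  by_cases hib : b ≤ (i : ℕ) ∧ (i : ℕ) < b + l
  · rw [ctr_in_block hl hib.1 hib.2, xpd_le (le_refl b)]
    have h1 := (Hblk b (by omega)).mp (by omega)
    have h2 := (Hblk i i.isLt).mp hib
    rw [pval_eq σ hn i.isLt, Fin.eta] at h2
    rw [ctr_in_block hl h1.1 h1.2, ctr_in_block hl h2.1 h2.2]
  · rw [xpd_ctr_off hl (by omega), pval_eq σ hn i.isLt, Fin.eta]

lemma blkN_inv (σ : Equiv.Perm (Fin n)) (hn : 0 < n) (hl : 0 < l)
    (hbn : b + l ≤ n) (hcn : c + l ≤ n)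
    (Hblk : ∀ x : ℕ, x < n →
      ((b ≤ x ∧ x < b + l) ↔ (c ≤ pval σ hn x ∧ pval σ hn x < c + l)))
    {j : ℕ} (hj : j < l) :
    pval σ.symm hn (c + (pval σ hn (b + j) - c)) - b = j := by
  have hbj : b + j < n := by omega
  have hv := (Hblk (b + j) hbj).mp (by omega)
  have h2 : c + (pval σ hn (b + j) - c) = pval σ hn (b + j) := by omega
  rw [h2, pval_symm σ hn hbj]
  omega

/-- the block pattern permutation -/
def blkPerm (n l b c : ℕ) (σ : Equiv.Perm (Fin n)) (hn : 0 < n) (hl : 0 < l)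
    (hbn : b + l ≤ n) (hcn : c + l ≤ n)
    (Hblk : ∀ x : ℕ, x < n →
      ((b ≤ x ∧ x < b + l) ↔ (c ≤ pval σ hn x ∧ pval σ hn x < c + l))) :
    Equiv.Perm (Fin l) where
  toFun j := ⟨pval σ hn (b + (j : ℕ)) - c, by
    have hj := j.isLt
    have := (Hblk (b + (j : ℕ)) (by omega)).mp (by omega)
    omega⟩
  invFun j := ⟨pval σ.symm hn (c + (j : ℕ)) - b, by
    have hj := j.isLt
    have := (Hblk_symm σ hn Hblk (c + (j : ℕ)) (by omega)).mp (by omega)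
    omega⟩
  left_inv j := by
    apply Fin.ext
    exact blkN_inv σ hn hl hbn hcn Hblk j.isLt
  right_inv j := by
    apply Fin.ext
    have := blkN_inv σ.symm hn hl hcn hbn (Hblk_symm σ hn Hblk) j.isLt
    rwa [Equiv.symm_symm] at this

lemma blkPerm_rho (σ : Equiv.Perm (Fin n)) (hn : 0 < n) (hl : 0 < l)
    (hbn : b + l ≤ n) (hcn : c + l ≤ n)
    (Hblk : ∀ x : ℕ, x < n →
      ((b ≤ x ∧ x < b + l) ↔ (c ≤ pval σ hn x ∧ pval σ hn x < c + l)))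
    (j : Fin l) (h : b + (j : ℕ) < n) :
    ((σ ⟨b + (j : ℕ), h⟩ : Fin n) : ℕ) =
      c + ((blkPerm n l b c σ hn hl hbn hcn Hblk j : Fin l) : ℕ) := by
  have hj := j.isLt
  have hval : ((blkPerm n l b c σ hn hl hbn hcn Hblk j : Fin l) : ℕ)
      = pval σ hn (b + (j : ℕ)) - c := rfl
  have hv := (Hblk (b + (j : ℕ)) h).mp (by omega)
  rw [hval, pval_eq σ hn h] at *
  omega


/-- helper : pval of ctrPerm -/
lemma ctrPerm_pval (σ : Equiv.Perm (Fin n)) (hn : 0 < n) (hl : 0 < l)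
    (hbn : b + l ≤ n) (hcn : c + l ≤ n)
    (Hblk : ∀ x : ℕ, x < n →
      ((b ≤ x ∧ x < b + l) ↔ (c ≤ pval σ hn x ∧ pval σ hn x < c + l)))
    (hx : x < n - l + 1) :
    pval (ctrPerm n l b c σ hn hl hbn hcn Hblk) (Nat.succ_pos _) x = ctrN n l b c σ hn x := by
  rw [pval_eq _ _ hx]
  rfl

/-- uniqueness of π given the spec -/
lemma pi_unique (hl : 0 < l) (hbn : b + l ≤ n) (σ : Equiv.Perm (Fin n))
    (π π' : Equiv.Perm (Fin (n - l + 1)))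
    (Hπ : ∀ (i : Fin n) (h : ctr b l (i : ℕ) < n - l + 1),
      ((π ⟨ctr b l (i : ℕ), h⟩ : Fin (n - l + 1)) : ℕ) = ctr c l ((σ i : Fin n) : ℕ))
    (Hπ' : ∀ (i : Fin n) (h : ctr b l (i : ℕ) < n - l + 1),
      ((π' ⟨ctr b l (i : ℕ), h⟩ : Fin (n - l + 1)) : ℕ) = ctr c l ((σ i : Fin n) : ℕ)) :
    π = π' := by
  apply Equiv.ext
  intro j
  apply Fin.ext
  have hx : xpd b l (j : ℕ) < n := xpd_lt hl hbn j.isLt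
  have hc1 : ctr b l ((⟨xpd b l (j : ℕ), hx⟩ : Fin n) : ℕ) = (j : ℕ) := ctr_xpd hl
  have hc2 : ctr b l ((⟨xpd b l (j : ℕ), hx⟩ : Fin n) : ℕ) < n - l + 1 := by
    rw [hc1]; exact j.isLt
  have h1 := Hπ ⟨xpd b l (j : ℕ), hx⟩ hc2
  have h2 := Hπ' ⟨xpd b l (j : ℕ), hx⟩ hc2
  have he : (⟨ctr b l ((⟨xpd b l (j : ℕ), hx⟩ : Fin n) : ℕ), hc2⟩ : Fin (n - l + 1)) = j :=
    Fin.ext hc1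
  rw [he] at h1 h2
  rw [h1, h2]

lemma rho_unique (hl : 0 < l) (hbn : b + l ≤ n) (σ : Equiv.Perm (Fin n))
    (ρ ρ' : Equiv.Perm (Fin l))
    (Hρ : ∀ (j : Fin l) (h : b + (j : ℕ) < n),
      ((σ ⟨b + (j : ℕ), h⟩ : Fin n) : ℕ) = c + ((ρ j : Fin l) : ℕ))
    (Hρ' : ∀ (j : Fin l) (h : b + (j : ℕ) < n),
      ((σ ⟨b + (j : ℕ), h⟩ : Fin n) : ℕ) = c + ((ρ' j : Fin l) : ℕ)) :
    ρ = ρ' := by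
  apply Equiv.ext
  intro j
  apply Fin.ext
  have h : b + (j : ℕ) < n := by have := j.isLt; omega
  have h1 := Hρ j h
  have h2 := Hρ' j h
  omega

/-- the full inflation map -/
def PhiFull (n l c : ℕ) (hl : 0 < l) (hln : l ≤ n) (hcn : c + l ≤ n)
    (π : Equiv.Perm (Fin (n - l + 1))) (ρ : Equiv.Perm (Fin l)) : Equiv.Perm (Fin n) :=
  phiPerm n l (pval π.symm (Nat.succ_pos _) c) c hl
    (by have := pval_lt π.symm (Nat.succ_pos _) c; omega) hcn π ρ
    (by
      have h := pval_symm π.symm (Nat.succ_pos _) (show c < n - l + 1 by omega)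
      rwa [Equiv.symm_symm] at h)

end CP
/-- for cluster-free `τ`, the exact number (and probability) of `τ`-avoiding
permutations in `A^{(n)}_{l;k}`. -/
theorem avoid_cluster_exact_clusterFree (m : ℕ) (hm : 2 ≤ m) (τ : Equiv.Perm (Fin m))
    (hτ : ClusterFree τ)
    (n : ℕ) (hn : 3 ≤ n) (l : ℕ) (hl2 : 2 ≤ l) (hln : l ≤ n - 1)
    (k : ℕ) (hk1 : 1 ≤ k) (hk2 : k ≤ n - l + 1) :
    (ClusterEvent n l k ∩ AvoidSet n τ).ncard =
      (AvoidSet (n - l + 1) τ).ncard * (AvoidSet l τ).ncard ∧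
    ((ClusterEvent n l k ∩ AvoidSet n τ).ncard : ℝ) / ((AvoidSet n τ).ncard : ℝ) =
      (((AvoidSet (n - l + 1) τ).ncard * (AvoidSet l τ).ncard : ℕ) : ℝ) /
        ((AvoidSet n τ).ncard : ℝ) := by
  have hl1 : 0 < l := by omega
  have hln2 : l ≤ n := by omega
  have hn0 : 0 < n := by omega
  set c := k - 1 with hck
  have hcn : c + l ≤ n := by omega
  have hkc : k = c + 1 := by omega
  set A := AvoidSet (n - l + 1) τ with hA
  set B := AvoidSet l τ with hB
  set T := ClusterEvent n l k ∩ AvoidSet n τ with hT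
  set F : Equiv.Perm (Fin (n - l + 1)) × Equiv.Perm (Fin l) → Equiv.Perm (Fin n) :=
    fun p => CP.PhiFull n l c hl1 hln2 hcn p.1 p.2 with hF
  -- the specification of F
  have Fspec : ∀ (π : Equiv.Perm (Fin (n - l + 1))) (ρ : Equiv.Perm (Fin l)),
      ∃ b : ℕ, ∃ (hbn : b + l ≤ n) (hb' : b < n - l + 1)
        (hbc : CP.pval π (Nat.succ_pos _) b = c),
        F (π, ρ) = CP.phiPerm n l b c hl1 hbn hcn π ρ hbc := by
    intro π ρ
    refine ⟨CP.pval π.symm (Nat.succ_pos _) c,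
      (by have := CP.pval_lt π.symm (Nat.succ_pos _) c; omega),
      CP.pval_lt π.symm (Nat.succ_pos _) c, ?_, rfl⟩
    have h := CP.pval_symm π.symm (Nat.succ_pos _) (show c < n - l + 1 by omega)
    rwa [Equiv.symm_symm] at h
  have hbij : Set.BijOn F (A ×ˢ B) T := by
    refine ⟨?_, ?_, ?_⟩
    · -- MapsTo
      rintro ⟨π, ρ⟩ ⟨hπA, hρB⟩
      obtain ⟨b, hbn, hb', hbc, hFeq⟩ := Fspec π ρ
      set σ := F (π, ρ) with hσ
      have Hblk : ∀ i : Fin n,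
          (b ≤ (i : ℕ) ∧ (i : ℕ) < b + l) ↔ (c ≤ (σ i : ℕ) ∧ (σ i : ℕ) < c + l) := by
        rw [hFeq]
        exact CP.phiPerm_blk hl1 hbn hcn π ρ hbc
      have Hπ : ∀ (i : Fin n) (h : CP.ctr b l (i : ℕ) < n - l + 1),
          ((π ⟨CP.ctr b l (i : ℕ), h⟩ : Fin (n - l + 1)) : ℕ) = CP.ctr c l ((σ i : Fin n) : ℕ) := by
        intro i h
        rw [hFeq]
        exact CP.phiPerm_pi hl1 hbn hcn π ρ hbc i h
      have Hρ : ∀ (j : Fin l) (h : b + (j : ℕ) < n),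
          ((σ ⟨b + (j : ℕ), h⟩ : Fin n) : ℕ) = c + ((ρ j : Fin l) : ℕ) := by
        intro j h
        rw [hFeq]
        exact CP.phiPerm_rho hl1 hbn hcn π ρ hbc j h
      constructor
      · refine ⟨b + 1, by omega, by omega, ?_⟩
        rw [hkc]
        exact CP.clusterAt_of_block hl1 hbn hcn σ Hblk
      · intro hcont
        rcases CP.contains_cases τ hτ σ π ρ hl1 hbn Hblk Hπ Hρ hcont with h | h
        · exact hπA h
        · exact hρB h
    · -- InjOn
      rintro ⟨π, ρ⟩ ⟨hπA, hρB⟩ ⟨π', ρ'⟩ ⟨hπA', hρB'⟩ heq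
      obtain ⟨b, hbn, hb', hbc, hFeq⟩ := Fspec π ρ
      obtain ⟨b2, hbn2, hb2', hbc2, hFeq2⟩ := Fspec π' ρ'
      set σ := F (π, ρ) with hσ
      have hσ2 : F (π', ρ') = σ := heq.symm
      have Hblk : ∀ i : Fin n,
          (b ≤ (i : ℕ) ∧ (i : ℕ) < b + l) ↔ (c ≤ (σ i : ℕ) ∧ (σ i : ℕ) < c + l) := by
        rw [hFeq]; exact CP.phiPerm_blk hl1 hbn hcn π ρ hbc
      have Hblk2 : ∀ i : Fin n,
          (b2 ≤ (i : ℕ) ∧ (i : ℕ) < b2 + l) ↔ (c ≤ (σ i : ℕ) ∧ (σ i : ℕ) < c + l) := by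
        rw [← hσ2, hFeq2]; exact CP.phiPerm_blk hl1 hbn2 hcn π' ρ' hbc2
      have hbb : b = b2 := CP.block_unique hl1 hbn hbn2 σ Hblk Hblk2
      subst hbb
      have Hπ : ∀ (i : Fin n) (h : CP.ctr b l (i : ℕ) < n - l + 1),
          ((π ⟨CP.ctr b l (i : ℕ), h⟩ : Fin (n - l + 1)) : ℕ) = CP.ctr c l ((σ i : Fin n) : ℕ) := by
        intro i h; rw [hFeq]; exact CP.phiPerm_pi hl1 hbn hcn π ρ hbc i h
      have Hπ2 : ∀ (i : Fin n) (h : CP.ctr b l (i : ℕ) < n - l + 1),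
          ((π' ⟨CP.ctr b l (i : ℕ), h⟩ : Fin (n - l + 1)) : ℕ) = CP.ctr c l ((σ i : Fin n) : ℕ) := by
        intro i h; rw [← hσ2, hFeq2]; exact CP.phiPerm_pi hl1 hbn2 hcn π' ρ' hbc2 i h
      have Hρ : ∀ (j : Fin l) (h : b + (j : ℕ) < n),
          ((σ ⟨b + (j : ℕ), h⟩ : Fin n) : ℕ) = c + ((ρ j : Fin l) : ℕ) := by
        intro j h; rw [hFeq]; exact CP.phiPerm_rho hl1 hbn hcn π ρ hbc j h
      have Hρ2 : ∀ (j : Fin l) (h : b + (j : ℕ) < n),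
          ((σ ⟨b + (j : ℕ), h⟩ : Fin n) : ℕ) = c + ((ρ' j : Fin l) : ℕ) := by
        intro j h; rw [← hσ2, hFeq2]; exact CP.phiPerm_rho hl1 hbn2 hcn π' ρ' hbc2 j h
      have e1 : π = π' := CP.pi_unique hl1 hbn σ π π' Hπ Hπ2
      have e2 : ρ = ρ' := CP.rho_unique hl1 hbn σ ρ ρ' Hρ Hρ2
      rw [Prod.mk.injEq]
      exact ⟨e1, e2⟩
    · -- SurjOn
      rintro σ ⟨⟨a, ha1, ha2, hca⟩, hσav⟩
      have hbn : (a - 1) + l ≤ n := by omega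
      set b := a - 1 with hb
      have HblkF : ∀ i : Fin n,
          (b ≤ (i : ℕ) ∧ (i : ℕ) < b + l) ↔ (c ≤ (σ i : ℕ) ∧ (σ i : ℕ) < c + l) :=
        CP.block_of_clusterAt hl1 hk1 ha1 hbn (by omega) σ hca
      have HblkN := CP.HblkN_of_Fin σ hn0 HblkF
      set π := CP.ctrPerm n l b c σ hn0 hl1 hbn hcn HblkN with hπ
      set ρ := CP.blkPerm n l b c σ hn0 hl1 hbn hcn HblkN with hρ
      have Hπ : ∀ (i : Fin n) (h : CP.ctr b l (i : ℕ) < n - l + 1),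
          ((π ⟨CP.ctr b l (i : ℕ), h⟩ : Fin (n - l + 1)) : ℕ) = CP.ctr c l ((σ i : Fin n) : ℕ) :=
        fun i h => CP.ctrPerm_pi σ hn0 hl1 hbn hcn HblkN i h
      have Hρ : ∀ (j : Fin l) (h : b + (j : ℕ) < n),
          ((σ ⟨b + (j : ℕ), h⟩ : Fin n) : ℕ) = c + ((ρ j : Fin l) : ℕ) :=
        fun j h => CP.blkPerm_rho σ hn0 hl1 hbn hcn HblkN j h
      have hbc : CP.pval π (Nat.succ_pos _) b = c := by
        rw [hπ, CP.ctrPerm_pval σ hn0 hl1 hbn hcn HblkN (show b < n - l + 1 by omega),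
          CP.ctrN, CP.xpd_le (le_refl b)]
        have hv := (HblkN b (by omega)).mp (by omega)
        exact CP.ctr_in_block hl1 hv.1 hv.2
      refine ⟨(π, ρ), ⟨?_, ?_⟩, ?_⟩
      · intro hcont
        exact hσav (CP.contains_of_pi σ τ π hl1 hbn hcn HblkF Hπ hcont)
      · intro hcont
        exact hσav (CP.contains_of_rho σ τ ρ hl1 hbn Hρ hcont)
      · -- F (π, ρ) = σ
        have hbPhi : CP.pval π.symm (Nat.succ_pos _) c = b := by
          rw [← hbc, CP.pval_symm π (Nat.succ_pos _) (show b < n - l + 1 by omega)]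
        apply Equiv.ext
        intro i
        apply Fin.ext
        have hLHS : ((F (π, ρ) i : Fin n) : ℕ) =
            CP.inflN n l (CP.pval π.symm (Nat.succ_pos _) c) c π ρ hl1 (i : ℕ) := rfl
        rw [hLHS, hbPhi]
        by_cases hib : b ≤ (i : ℕ) ∧ (i : ℕ) < b + l
        · rw [CP.inflN_pos π ρ hl1 hib]
          have hρv : CP.pval ρ hl1 ((i : ℕ) - b) = CP.pval σ hn0 (b + ((i : ℕ) - b)) - c := by
            rw [hρ, CP.pval_eq _ hl1 (show (i : ℕ) - b < l by omega)]
            rfl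
          rw [hρv, show b + ((i : ℕ) - b) = (i : ℕ) by omega]
          have hv := (HblkN i i.isLt).mp hib
          rw [CP.pval_eq σ hn0 i.isLt, Fin.eta] at hv ⊢
          omega
        · rw [CP.inflN_neg π ρ hl1 hib]
          have hπv : CP.pval π (Nat.succ_pos _) (CP.ctr b l (i : ℕ)) =
              CP.ctr c l ((σ i : Fin n) : ℕ) := by
            rw [hπ, CP.ctrPerm_pval σ hn0 hl1 hbn hcn HblkN (CP.ctr_lt hl1 hbn i.isLt),
              CP.ctrN, CP.xpd_ctr_off hl1 (by omega), CP.pval_eq σ hn0 i.isLt, Fin.eta]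
          rw [hπv]
          have hvoff : ¬(c ≤ ((σ i : Fin n) : ℕ) ∧ ((σ i : Fin n) : ℕ) < c + l) :=
            fun hcon => hib ((HblkF i).mpr hcon)
          exact CP.xpd_ctr_off hl1 (by omega)
  have h1 : T.ncard = A.ncard * B.ncard := by
    calc T.ncard = Nat.card T := (Nat.card_coe_set_eq T).symm
      _ = Nat.card (↥A × ↥B) :=
        Nat.card_congr ((Set.BijOn.equiv F hbij).symm.trans (Equiv.Set.prod A B))
      _ = Nat.card ↥A * Nat.card ↥B := Nat.card_prod _ _
      _ = A.ncard * B.ncard := by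
        rw [Nat.card_coe_set_eq, Nat.card_coe_set_eq]
  exact ⟨h1, by rw [h1]⟩
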